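/- arXiv:2503.24054 — 2 statements merged into one kernel-verified Lean document; each statement's English description precedes it below -/
import Mathlib

section
/- Let p, q ∈ ℝ be constants, let (a_n)_{n≥0} be a real sequence, and let (a_n^k) satisfy a_n^0 = a_n and a_n^k = p·a_n^{k−1} + q·(n+1)·a_{n+1}^{k−1} for n ≥ 0, k ≥ 1. Then the exponential generating function of the final sequence satisfies Ā(t) = exp(p t) · a(q t) as formal power series in ℝ⟦t⟧; equivalently, for every k ≥ 0, a_0^k = Σ_{ℓ=0}^{k} (k!/(k−ℓ)!) · p^{k−ℓ} · q^ℓ · a_ℓ^0. -/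
open PowerSeries

lemma closed_form (p q : ℝ) (a₀ : ℕ → ℝ) (a : ℕ → ℕ → ℝ)
    (h0 : ∀ n, a n 0 = a₀ n)
    (hrec : ∀ n k, a n (k + 1) = p * a n k + q * ((n : ℝ) + 1) * a (n + 1) k) :
    ∀ k n, a n k = ∑ ℓ ∈ Finset.range (k + 1),
      (k.choose ℓ : ℝ) * p ^ (k - ℓ) * q ^ ℓ *
        (((n + ℓ).factorial : ℝ) / (n.factorial : ℝ)) * a₀ (n + ℓ) := by
  intro k
  induction k with
  | zero =>
      intro n
      rw [h0]
      simp [div_self (Nat.cast_ne_zero.mpr (Nat.factorial_ne_zero n) : (n.factorial:ℝ) ≠ 0)]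
  | succ k ih =>
    intro n
    rw [hrec, ih n, ih (n + 1)]
    conv_rhs => rw [Finset.sum_range_succ']
    conv_lhs => rw [Finset.sum_range_succ']
    have hsplit : ∀ ℓ ∈ Finset.range (k + 1),
        ((k+1).choose (ℓ+1) : ℝ) * p ^ (k + 1 - (ℓ+1)) * q ^ (ℓ+1) *
          (((n + (ℓ+1)).factorial : ℝ) / (n.factorial : ℝ)) * a₀ (n + (ℓ+1)) =
        ((k.choose ℓ : ℝ) * p ^ (k - ℓ) * q ^ (ℓ+1) *
          (((n + ℓ + 1).factorial : ℝ) / (n.factorial : ℝ)) * a₀ (n + ℓ + 1)) +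
        ((k.choose (ℓ+1) : ℝ) * p ^ (k - ℓ) * q ^ (ℓ+1) *
          (((n + ℓ + 1).factorial : ℝ) / (n.factorial : ℝ)) * a₀ (n + ℓ + 1)) := by
      intro ℓ hℓ
      have : (k+1).choose (ℓ+1) = k.choose ℓ + k.choose (ℓ+1) := Nat.choose_succ_succ k ℓ
      rw [this]
      push_cast
      have h2 : n + (ℓ + 1) = n + ℓ + 1 := by omega
      rw [h2]
      ring
    rw [Finset.sum_congr rfl hsplit, Finset.sum_add_distrib]
    -- now RHS = A + B + G0
    have hB : ∑ ℓ ∈ Finset.range (k + 1),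
        ((k.choose (ℓ+1) : ℝ) * p ^ (k - ℓ) * q ^ (ℓ+1) *
          (((n + ℓ + 1).factorial : ℝ) / (n.factorial : ℝ)) * a₀ (n + ℓ + 1)) =
        p * ∑ ℓ ∈ Finset.range k,
        ((k.choose (ℓ+1) : ℝ) * p ^ (k - (ℓ+1)) * q ^ (ℓ+1) *
          (((n + (ℓ+1)).factorial : ℝ) / (n.factorial : ℝ)) * a₀ (n + (ℓ+1))) := by
      rw [Finset.sum_range_succ, Nat.choose_succ_self, Finset.mul_sum]
      simp only [Nat.cast_zero, zero_mul, add_zero]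
      refine Finset.sum_congr rfl ?_
      intro ℓ hℓ
      have hℓk : ℓ < k := Finset.mem_range.mp hℓ
      have : k - ℓ = (k - (ℓ+1)) + 1 := by omega
      rw [this, pow_succ]
      have : n + (ℓ + 1) = n + ℓ + 1 := by omega
      rw [this]
      ring
    have hA : ∑ ℓ ∈ Finset.range (k + 1),
        ((k.choose ℓ : ℝ) * p ^ (k - ℓ) * q ^ (ℓ+1) *
          (((n + ℓ + 1).factorial : ℝ) / (n.factorial : ℝ)) * a₀ (n + ℓ + 1)) =
        q * ((n : ℝ) + 1) * ∑ ℓ ∈ Finset.range (k + 1),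
        ((k.choose ℓ : ℝ) * p ^ (k - ℓ) * q ^ ℓ *
          (((n + 1 + ℓ).factorial : ℝ) / ((n+1).factorial : ℝ)) * a₀ (n + 1 + ℓ)) := by
      rw [Finset.mul_sum]
      refine Finset.sum_congr rfl ?_
      intro ℓ hℓ
      have h1 : n + 1 + ℓ = n + ℓ + 1 := by omega
      rw [h1]
      have hf : ((n+1).factorial : ℝ) = ((n:ℝ)+1) * (n.factorial : ℝ) := by
        rw [Nat.factorial_succ]; push_cast; ring
      rw [hf]
      have hn : (n.factorial : ℝ) ≠ 0 := Nat.cast_ne_zero.mpr n.factorial_ne_zero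
      have hn1 : ((n:ℝ)+1) ≠ 0 := by positivity
      field_simp
      ring
    rw [hA, hB]
    simp only [Nat.choose_zero_right, Nat.cast_one, one_mul, pow_zero, Nat.sub_zero,
      add_zero, mul_one, Nat.div_self]
    rw [div_self (Nat.cast_ne_zero.mpr n.factorial_ne_zero)]
    ring

/-- Theorem 2.11: if `a_n^k = p a_n^{k-1} + q(n+1) a_{n+1}^{k-1}`, then the exponential
generating function of the final sequence is `exp(pt) a(qt)`; equivalently
`a_0^k = Σ_ℓ (k!/(k-ℓ)!) p^{k-ℓ} q^ℓ a_ℓ^0`. -/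
theorem egf_final_eq (p q : ℝ) (a₀ : ℕ → ℝ) (a : ℕ → ℕ → ℝ)
    (h0 : ∀ n, a n 0 = a₀ n)
    (hrec : ∀ n k, a n (k + 1) = p * a n k + q * ((n : ℝ) + 1) * a (n + 1) k) :
    PowerSeries.mk (fun k => a 0 k / k.factorial) =
      rescale p (exp ℝ) * PowerSeries.mk (fun n => a₀ n * q ^ n) ∧
    ∀ k, a 0 k = ∑ ℓ ∈ Finset.range (k + 1),
      ((k.factorial : ℝ) / (k - ℓ).factorial) * p ^ (k - ℓ) * q ^ ℓ * a₀ ℓ := by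
  have hsum : ∀ k, a 0 k = ∑ ℓ ∈ Finset.range (k + 1),
      ((k.factorial : ℝ) / (k - ℓ).factorial) * p ^ (k - ℓ) * q ^ ℓ * a₀ ℓ := by
    intro k
    rw [closed_form p q a₀ a h0 hrec k 0]
    refine Finset.sum_congr rfl ?_
    intro ℓ hℓ
    have hℓk : ℓ ≤ k := by
      have := Finset.mem_range.mp hℓ; omega
    rw [Nat.cast_choose ℝ hℓk]
    have h1 : 0 + ℓ = ℓ := by omega
    rw [h1]
    simp only [Nat.factorial_zero, Nat.cast_one, div_one]
    have hℓf : ((ℓ.factorial : ℝ)) ≠ 0 := Nat.cast_ne_zero.mpr ℓ.factorial_ne_zero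
    have hkℓf : (((k-ℓ).factorial : ℝ)) ≠ 0 := Nat.cast_ne_zero.mpr (k-ℓ).factorial_ne_zero
    field_simp
  refine ⟨?_, hsum⟩
  ext k
  rw [coeff_mk, coeff_mul, Finset.Nat.sum_antidiagonal_eq_sum_range_succ_mk]
  simp only [coeff_rescale, coeff_exp, coeff_mk, map_div₀, map_one, map_natCast]
  rw [hsum k, Finset.sum_div, ← Finset.sum_range_reflect]
  refine Finset.sum_congr rfl ?_
  intro ℓ hℓ
  have hℓk : ℓ ≤ k := by
    have := Finset.mem_range.mp hℓ; omega
  have h1 : k + 1 - 1 - ℓ = k - ℓ := by omega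
  have h2 : k - (k - ℓ) = ℓ := by omega
  rw [h1, h2]
  have hkf : ((k.factorial : ℝ)) ≠ 0 := Nat.cast_ne_zero.mpr k.factorial_ne_zero
  have hkℓf : (((k-ℓ).factorial : ℝ)) ≠ 0 := Nat.cast_ne_zero.mpr (k-ℓ).factorial_ne_zero
  field_simp
end

section
/- Let p, q ∈ ℝ be constants, let (a_n)_{n≥0} be a real sequence, and let (a_n^k) satisfy a_n^0 = a_n and a_n^k = (p/k)·a_n^{k−1} + (q/k)·a_{n+1}^{k−1} for n ≥ 0, k ≥ 1. Then the ordinary generating function of the final sequence satisfies ā(t) = exp(p t) · A(q t) as formal power series in ℝ⟦t⟧; equivalently, for every k ≥ 0, a_0^k = Σ_{ℓ=0}^{k} ( p^{k−ℓ}/(k−ℓ)! ) · ( q^ℓ/ℓ! ) · a_ℓ^0. -/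
open PowerSeries Finset


noncomputable def ckl (p q : ℝ) (k ℓ : ℕ) : ℝ :=
  p ^ (k - ℓ) / (k - ℓ).factorial * (q ^ ℓ / ℓ.factorial)

lemma step_sum (p q : ℝ) (k : ℕ) (A : ℕ → ℝ) :
    p / ((k : ℝ) + 1) * ∑ ℓ ∈ range (k + 1), ckl p q k ℓ * A ℓ
      + q / ((k : ℝ) + 1) * ∑ ℓ ∈ range (k + 1), ckl p q k ℓ * A (ℓ + 1)
    = ∑ ℓ ∈ range (k + 2), ckl p q (k + 1) ℓ * A ℓ := by
  have hk : ((k : ℝ) + 1) ≠ 0 := by positivity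
  rw [Finset.sum_range_succ' (fun ℓ => ckl p q (k+1) ℓ * A ℓ) (k+1)]
  rw [Finset.sum_range_succ (fun ℓ => ckl p q (k+1) (ℓ+1) * A (ℓ+1)) k]
  rw [Finset.sum_range_succ' (fun ℓ => ckl p q k ℓ * A ℓ) k]
  rw [Finset.sum_range_succ (fun ℓ => ckl p q k ℓ * A (ℓ+1)) k]
  have hmain : ∀ ℓ ∈ range k,
      p / ((k : ℝ) + 1) * (ckl p q k (ℓ+1) * A (ℓ+1))
      + q / ((k : ℝ) + 1) * (ckl p q k ℓ * A (ℓ+1))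
      = ckl p q (k+1) (ℓ+1) * A (ℓ+1) := by
    intro ℓ hℓ
    rw [Finset.mem_range] at hℓ
    obtain ⟨m, rfl⟩ : ∃ m, k = ℓ + 1 + m := ⟨k - (ℓ+1), by omega⟩
    simp only [ckl]
    have e1 : ℓ + 1 + m - (ℓ + 1) = m := by omega
    have e2 : ℓ + 1 + m - ℓ = m + 1 := by omega
    have e3 : ℓ + 1 + m + 1 - (ℓ + 1) = m + 1 := by omega
    rw [e1, e2, e3]
    have hf1 : ((m.factorial : ℝ)) ≠ 0 := by positivity
    have hf2 : ((ℓ.factorial : ℝ)) ≠ 0 := by positivity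
    rw [Nat.factorial_succ m, Nat.factorial_succ ℓ]
    push_cast
    field_simp
    ring
  have h0' : p / ((k : ℝ) + 1) * (ckl p q k 0 * A 0) = ckl p q (k+1) 0 * A 0 := by
    simp only [ckl, Nat.sub_zero]
    rw [Nat.factorial_succ k]
    push_cast
    field_simp
    ring
  have hk' : q / ((k : ℝ) + 1) * (ckl p q k k * A (k+1))
      = ckl p q (k+1) (k+1) * A (k+1) := by
    simp only [ckl, Nat.sub_self]
    rw [Nat.factorial_succ k]
    push_cast
    field_simp
    ring
  rw [mul_add, mul_add, Finset.mul_sum, Finset.mul_sum]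
  have hsum : (∑ i ∈ range k, p / ((k:ℝ)+1) * (ckl p q k (i+1) * A (i+1)))
      + ∑ i ∈ range k, q / ((k:ℝ)+1) * (ckl p q k i * A (i+1))
      = ∑ x ∈ range k, ckl p q (k+1) (x+1) * A (x+1) := by
    rw [← Finset.sum_add_distrib]; exact Finset.sum_congr rfl hmain
  linarith [hsum, h0', hk']

lemma key (p q : ℝ) (a₀ : ℕ → ℝ) (a : ℕ → ℕ → ℝ)
    (h0 : ∀ n, a n 0 = a₀ n)
    (hrec : ∀ n k, a n (k + 1) =
      p / ((k : ℝ) + 1) * a n k + q / ((k : ℝ) + 1) * a (n + 1) k) :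
    ∀ k n, a n k = ∑ ℓ ∈ range (k + 1), ckl p q k ℓ * a₀ (n + ℓ) := by
  intro k
  induction k with
  | zero => intro n; simp [ckl, h0]
  | succ k ih =>
    intro n
    rw [hrec, ih n, ih (n+1)]
    have := step_sum p q k (fun ℓ => a₀ (n + ℓ))
    rw [← this]
    congr 1
    exact congrArg _ (Finset.sum_congr rfl fun ℓ _ =>
      by rw [show n+1+ℓ = n+(ℓ+1) from by omega])

/-- Theorem 2.12: if `a_n^k = (p/k) a_n^{k-1} + (q/k) a_{n+1}^{k-1}`, then the ordinary
generating function of the final sequence is `exp(pt) A(qt)`; equivalently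
`a_0^k = Σ_ℓ (p^{k-ℓ}/(k-ℓ)!) (q^ℓ/ℓ!) a_ℓ^0`. -/
theorem ogf_final_eq (p q : ℝ) (a₀ : ℕ → ℝ) (a : ℕ → ℕ → ℝ)
    (h0 : ∀ n, a n 0 = a₀ n)
    (hrec : ∀ n k, a n (k + 1) =
      p / ((k : ℝ) + 1) * a n k + q / ((k : ℝ) + 1) * a (n + 1) k) :
    PowerSeries.mk (fun k => a 0 k) =
      rescale p (exp ℝ) * PowerSeries.mk (fun n => a₀ n / n.factorial * q ^ n) ∧
    ∀ k, a 0 k = ∑ ℓ ∈ Finset.range (k + 1),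
      (p ^ (k - ℓ) / (k - ℓ).factorial) * (q ^ ℓ / ℓ.factorial) * a₀ ℓ := by
  have hkey := key p q a₀ a h0 hrec
  have h2 : ∀ k, a 0 k = ∑ ℓ ∈ Finset.range (k + 1),
      (p ^ (k - ℓ) / (k - ℓ).factorial) * (q ^ ℓ / ℓ.factorial) * a₀ ℓ := by
    intro k; rw [hkey k 0]; simp [ckl]
  refine ⟨?_, h2⟩
  ext k
  rw [coeff_mk, coeff_mul, Finset.Nat.sum_antidiagonal_eq_sum_range_succ_mk]
  simp only [coeff_rescale, coeff_exp, coeff_mk]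
  rw [h2 k, ← Finset.sum_range_reflect]
  apply Finset.sum_congr rfl
  intro ℓ hℓ
  rw [Finset.mem_range] at hℓ
  have hℓk : ℓ ≤ k := by omega
  rw [Nat.add_sub_cancel, show k - (k - ℓ) = ℓ from by omega]
  simp only [map_div₀, map_one, map_natCast]
  ring
end
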